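/- In a DAG, disjoint vertex sets A and B are d-separated by S if and only if A and B are separated by S in the moral graph of the ancestral subgraph generated by A ∪ B ∪ S. -/

import Mathlib

/-- Skeleton (undirected) adjacency of a directed graph. -/
def Skel {V : Type*} (E : V → V → Prop) (a b : V) : Prop := E a b ∨ E b a

/-- Directed reachability: `Reaches E a b` iff there is a directed path from `a` to `b`. -/
def Reaches {V : Type*} (E : V → V → Prop) : V → V → Prop := Relation.ReflTransGen E

/-- A directed graph is acyclic if no edge can be completed to a directed cycle. -/
def IsAcyclicD {V : Type*} (E : V → V → Prop) : Prop := ∀ a b : V, E a b → ¬ Reaches E b a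

/-- `(a, b, c)` is an immorality (v-structure): `a → b ← c` with `a, c` non-adjacent. -/
def Immorality {V : Type*} (E : V → V → Prop) (a b c : V) : Prop :=
  a ≠ c ∧ E a b ∧ E c b ∧ ¬ Skel E a c

/-- `p` is an (undirected) trail from `a` to `b` in the skeleton of `E`. -/
def IsTrail {V : Type*} (E : V → V → Prop) (a b : V) (p : List V) : Prop :=
  p.Chain' (Skel E) ∧ p.head? = some a ∧ p.getLast? = some b ∧ p.Nodup ∧ 2 ≤ p.length

/-- A consecutive triple `x - y - z` on a trail is blocked by `S`:
a collider `x → y ← z` blocks unless `y` has a descendant (possibly itself) in `S`;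
a non-collider blocks iff `y ∈ S`. -/
def BlockedTriple {V : Type*} (E : V → V → Prop) (S : Set V) (x y z : V) : Prop :=
  ((E x y ∧ E z y) ∧ ∀ d ∈ S, ¬ Reaches E y d) ∨ (¬ (E x y ∧ E z y) ∧ y ∈ S)

/-- A trail is blocked by `S` if some consecutive triple on it is blocked. -/
def BlockedTrail {V : Type*} (E : V → V → Prop) (S : Set V) (p : List V) : Prop :=
  ∃ l x y z r, p = l ++ x :: y :: z :: r ∧ BlockedTriple E S x y z

/-- d-separation: every trail between `A` and `B` is blocked by `S`. -/
def DSep {V : Type*} (E : V → V → Prop) (A B S : Set V) : Prop :=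
  ∀ a ∈ A, ∀ b ∈ B, ∀ p : List V, IsTrail E a b p → BlockedTrail E S p

/-- Markov equivalence: the same d-separations among disjoint sets. -/
def MarkovEquiv {V : Type*} (E₁ E₂ : V → V → Prop) : Prop :=
  ∀ A B S : Set V, Disjoint A B → Disjoint A S → Disjoint B S →
    (DSep E₁ A B S ↔ DSep E₂ A B S)

/-- The ancestral closure of `W`: all vertices with a directed path into `W`. -/
def AncSet {V : Type*} (E : V → V → Prop) (W : Set V) : Set V :=
  {v | ∃ w ∈ W, Reaches E v w}

/-- The subgraph induced on a vertex set. -/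
def InducedE {V : Type*} (E : V → V → Prop) (W : Set V) (a b : V) : Prop :=
  E a b ∧ a ∈ W ∧ b ∈ W

/-- Moral graph adjacency: skeleton edges plus marriages of common parents. -/
def Moral {V : Type*} (E : V → V → Prop) (a b : V) : Prop :=
  a ≠ b ∧ (E a b ∨ E b a ∨ ∃ c, E a c ∧ E b c)

/-- `p` is a path from `a` to `b` in the undirected graph `G`. -/
def UPath {V : Type*} (G : V → V → Prop) (a b : V) (p : List V) : Prop :=
  p.Chain' G ∧ p.head? = some a ∧ p.getLast? = some b ∧ p.Nodup

/-- Separation in an undirected graph: every path from `A` to `B` meets `S`. -/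
def USep {V : Type*} (G : V → V → Prop) (A B S : Set V) : Prop :=
  ∀ a ∈ A, ∀ b ∈ B, ∀ p : List V, UPath G a b p → ∃ s ∈ S, s ∈ p

open List
section
variable {V : Type*} {E : V → V → Prop} {S : Set V}

/-- every triple on `p` is unblocked -/
def OpenL (E : V → V → Prop) (S : Set V) (p : List V) : Prop :=
  ∀ l x y z r, p = l ++ x :: y :: z :: r → ¬ BlockedTriple E S x y z

lemma not_blockedTrail_iff {p : List V} : ¬ BlockedTrail E S p ↔ OpenL E S p := by
  unfold BlockedTrail OpenL; push_neg; tauto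

lemma skel_symm {a b : V} (h : Skel E a b) : Skel E b a := h.symm

lemma blockedTriple_symm {x y z : V} (h : BlockedTriple E S x y z) :
    BlockedTriple E S z y x := by
  unfold BlockedTriple at *; tauto

lemma not_E_self (hE : IsAcyclicD E) (x : V) : ¬ E x x :=
  fun h => hE x x h Relation.ReflTransGen.refl

lemma not_E_both (hE : IsAcyclicD E) {x y : V} (h : E x y) (h' : E y x) : False :=
  hE x y h (Relation.ReflTransGen.single h')

lemma reaches_trans {x y z : V} (h : Reaches E x y) (h' : Reaches E y z) : Reaches E x z :=
  Relation.ReflTransGen.trans h h'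

lemma reaches_head {x y z : V} (h : E x y) (h' : Reaches E y z) : Reaches E x z :=
  Relation.ReflTransGen.head h h'

lemma OpenL.suffix {p q : List V} (h : OpenL E S p) (hs : q <:+ p) : OpenL E S q := by
  obtain ⟨u, rfl⟩ := hs
  intro l x y z r hq
  exact h (u ++ l) x y z r (by rw [hq, append_assoc])

lemma OpenL.prefix {p q : List V} (h : OpenL E S p) (hs : q <+: p) : OpenL E S q := by
  obtain ⟨u, rfl⟩ := hs
  intro l x y z r hq
  exact h l x y z (r ++ u) (by rw [hq]; simp)

lemma OpenL.infix {p q : List V} (h : OpenL E S p) (hs : q <:+: p) : OpenL E S q := by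
  obtain ⟨u, w, rfl⟩ := hs
  exact ((h.suffix ⟨u, by rw [append_assoc]⟩).prefix ⟨w, rfl⟩)

lemma OpenL.reverse {p : List V} (h : OpenL E S p) : OpenL E S p.reverse := by
  intro l x y z r hq
  intro hb
  have hp : p = r.reverse ++ z :: y :: x :: l.reverse := by
    have := congrArg List.reverse hq
    simpa using this
  exact h _ _ _ _ _ hp (blockedTriple_symm hb)

lemma openL_cons {a : V} {t : List V} :
    OpenL E S (a :: t) ↔
      (∀ y z r, t = y :: z :: r → ¬ BlockedTriple E S a y z) ∧ OpenL E S t := by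
  constructor
  · intro h
    constructor
    · intro y z r ht; subst ht; exact h [] a y z r rfl
    · intro l x y z r ht; exact h (a :: l) x y z r (by rw [ht]; rfl)
  · rintro ⟨h1, h2⟩ l x y z r ht
    cases l with
    | nil => simp only [nil_append, cons.injEq] at ht; obtain ⟨rfl, h⟩ := ht; exact h1 y z r h
    | cons a' l' =>
      simp only [cons_append] at ht
      simp only [cons_append, cons.injEq] at ht
      exact h2 l' x y z r ht.2
end
section
open List
variable {V : Type*} {E : V → V → Prop} {S : Set V}

lemma reaches_of_chain' : ∀ {p : List V} {x w : V}, p.Chain' E → p.head? = some x →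
    p.getLast? = some w → Reaches E x w := by
  intro p
  induction p with
  | nil => intro x w _ h; simp at h
  | cons a t ih =>
    intro x w hc hh hl
    simp only [head?_cons, Option.some.injEq] at hh
    subst hh
    cases t with
    | nil => simp at hl; subst hl; exact Relation.ReflTransGen.refl
    | cons b t' =>
      have : (b :: t').getLast? = some w := by
        rw [← hl]; simp [getLast?_cons_cons]
      exact reaches_head (isChain_cons_cons.mp hc).1 (ih (isChain_cons_cons.mp hc).2 rfl this)

lemma chain_of_reaches {x w : V} (h : Reaches E x w) :
    ∃ p : List V, p.Chain' E ∧ p.head? = some x ∧ p.getLast? = some w := by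
  induction h with
  | refl => exact ⟨[x], isChain_singleton _, rfl, rfl⟩
  | tail _ hyw ih =>
    obtain ⟨p, hc, hh, hl⟩ := ih
    rename_i y' w' _
    have hpne : p ≠ [] := by rintro rfl; simp at hh
    refine ⟨p ++ [w'], ?_, ?_, by simp⟩
    · refine List.IsChain.append hc (isChain_singleton _) ?_
      intro u hu v hv
      simp only [head?_cons, Option.mem_def, Option.some.injEq] at hv
      rw [hl] at hu
      simp only [Option.mem_def, Option.some.injEq] at hu
      subst hu; subst hv; exact hyw
    · rw [head?_append, hh]; rfl

lemma reaches_of_mem_chain' : ∀ {p : List V} {x y : V}, p.Chain' E → p.head? = some x →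
    y ∈ p → Reaches E x y := by
  intro p
  induction p with
  | nil => intro x y _ _ h; simp at h
  | cons a t ih =>
    intro x y hc hh hm
    simp only [head?_cons, Option.some.injEq] at hh; subst hh
    rcases mem_cons.mp hm with rfl | hm
    · exact Relation.ReflTransGen.refl
    · cases t with
      | nil => simp at hm
      | cons b t' =>
        exact reaches_head (isChain_cons_cons.mp hc).1 (ih (isChain_cons_cons.mp hc).2 rfl hm)

lemma sfree_dirpath {x w : V} (h : Reaches E x w) (hx : x ∉ AncSet E S) :
    ∃ p : List V, p.Chain' E ∧ p.head? = some x ∧ p.getLast? = some w ∧ ∀ y ∈ p, y ∉ S := by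
  obtain ⟨p, hc, hh, hl⟩ := chain_of_reaches h
  refine ⟨p, hc, hh, hl, fun y hy hyS => hx ⟨y, hyS, reaches_of_mem_chain' hc hh hy⟩⟩

lemma notAnc_iff {y : V} : (∀ d ∈ S, ¬ Reaches E y d) ↔ y ∉ AncSet E S := by
  exact Iff.intro (fun h ⟨d, hd, hr⟩ => h d hd hr) (fun h d hd hr => h ⟨d, hd, hr⟩)

lemma mem_S_anc {y : V} (h : y ∈ S) : y ∈ AncSet E S := ⟨y, h, Relation.ReflTransGen.refl⟩

/-- the chase lemma: a suffix starting with an outgoing edge of a non-ancestor-of-S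
vertex is fully forward-directed -/
lemma chase : ∀ (r : List V) (x y : V), x ∉ AncSet E S →
    OpenL E S (x :: y :: r) → Chain' (Skel E) (x :: y :: r) → E x y →
    Chain' E (x :: y :: r) := by
  intro r
  induction r with
  | nil => intro x y _ _ _ hxy; exact isChain_cons_cons.mpr ⟨hxy, isChain_singleton y⟩
  | cons z r' ih =>
    intro x y hx ho hc hxy
    have htriple : ¬ BlockedTriple E S x y z := ho [] x y z r' rfl
    have hyz : E y z := by
      by_contra hyz
      have hzy : E z y := ((isChain_cons_cons.mp (isChain_cons_cons.mp hc).2).1).resolve_left hyz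
      -- collider at y
      have : ∃ d ∈ S, Reaches E y d := by
        by_contra hno
        push_neg at hno
        exact htriple (Or.inl ⟨⟨hxy, hzy⟩, hno⟩)
      obtain ⟨d, hd, hr⟩ := this
      exact hx ⟨d, hd, reaches_head hxy hr⟩
    have hy : y ∉ AncSet E S := fun ⟨d, hd, hr⟩ => hx ⟨d, hd, reaches_head hxy hr⟩
    have := ih y z hy (ho.suffix ⟨[x], rfl⟩) (isChain_cons_cons.mp hc).2 hyz
    exact isChain_cons_cons.mpr ⟨hxy, this⟩
end
section
open List
variable {V : Type*} {E : V → V → Prop} {A B S : Set V}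

lemma anc_mono {W W' : Set V} (h : W ⊆ W') : AncSet E W ⊆ AncSet E W' :=
  fun _ ⟨w, hw, hr⟩ => ⟨w, h hw, hr⟩

lemma self_mem_anc {W : Set V} {w : V} (h : w ∈ W) : w ∈ AncSet E W :=
  ⟨w, h, Relation.ReflTransGen.refl⟩

lemma anc_closed_reaches {W : Set V} {x y : V} (h : Reaches E x y) (hy : y ∈ AncSet E W) :
    x ∈ AncSet E W := by
  obtain ⟨w, hw, hr⟩ := hy; exact ⟨w, hw, reaches_trans h hr⟩

lemma anc_split {x : V} (h : x ∈ AncSet E (A ∪ B ∪ S)) :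
    x ∈ AncSet E A ∨ x ∈ AncSet E B ∨ x ∈ AncSet E S := by
  obtain ⟨w, hw, hr⟩ := h
  rcases hw with (hw | hw) | hw
  · exact Or.inl ⟨w, hw, hr⟩
  · exact Or.inr (Or.inl ⟨w, hw, hr⟩)
  · exact Or.inr (Or.inr ⟨w, hw, hr⟩)

lemma ancS_sub {x : V} (h : x ∈ AncSet E S) : x ∈ AncSet E (A ∪ B ∪ S) :=
  anc_mono (fun s hs => Or.inr hs) h

lemma getLast?_suffix_ne {s t : List V} (h : s <:+ t) {x : V} (hs : s.getLast? = some x) :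
    t.getLast? = some x := by
  obtain ⟨u, rfl⟩ := h; rw [getLast?_append, hs]; rfl

lemma getLast?_suffix_eq {s t : List V} (h : s <:+ t) (hs : s ≠ []) :
    s.getLast? = t.getLast? := by
  obtain ⟨u, rfl⟩ := h
  rw [getLast?_append]
  cases hx : s.getLast? with
  | none => exact absurd (getLast?_eq_none_iff.mp hx) hs
  | some x => rfl

lemma chaseN {v y t : V} {r : List V} (ho : OpenL E S (v :: y :: r))
    (hc : Chain' (Skel E) (v :: y :: r)) (hvy : E v y)
    (hl : (v :: y :: r).getLast? = some t) (ht : t ∈ AncSet E (A ∪ B ∪ S)) :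
    v ∈ AncSet E (A ∪ B ∪ S) := by
  by_cases hv : v ∈ AncSet E S
  · exact ancS_sub hv
  · have hch := chase r v y hv ho hc hvy
    exact anc_closed_reaches (reaches_of_chain' hch rfl hl) ht

lemma chain'_skel_reverse {p : List V} (h : Chain' (Skel E) p) :
    Chain' (Skel E) p.reverse := by
  rw [Chain', isChain_reverse]
  exact List.IsChain.imp (fun _ _ hs => hs.symm) h

lemma mem_N_all {p : List V} {a b : V} (hc : Chain' (Skel E) p) (ho : OpenL E S p)
    (hh : p.head? = some a) (hl : p.getLast? = some b)
    (ha : a ∈ AncSet E (A ∪ B ∪ S)) (hb : b ∈ AncSet E (A ∪ B ∪ S)) :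
    ∀ v ∈ p, v ∈ AncSet E (A ∪ B ∪ S) := by
  intro v hv
  obtain ⟨l, r, hp⟩ := List.append_of_mem hv
  rcases List.eq_nil_or_concat l with rfl | ⟨l₀, u, rfl⟩
  · rw [hp] at hh; simp only [nil_append, head?_cons, Option.some.injEq] at hh
    rwa [hh]
  rw [List.concat_eq_append] at hp
  cases r with
  | nil =>
    rw [hp] at hl
    have : (l₀ ++ [u] ++ [v]).getLast? = some v := by rw [getLast?_append]; rfl
    rw [this] at hl
    rw [← Option.some.injEq v b |>.mp hl] at hb
    exact hb
  | cons y r' =>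
    have hsuf1 : (v :: y :: r') <:+ p := ⟨l₀ ++ [u], by rw [hp]⟩
    have hsuf2 : (u :: v :: y :: r') <:+ p := ⟨l₀, by rw [hp]; simp⟩
    have hc2 := hc.suffix hsuf2
    have hskel_uv : Skel E u v := (isChain_cons_cons.mp hc2).1
    have hskel_vy : Skel E v y := (isChain_cons_cons.mp (isChain_cons_cons.mp hc2).2).1
    by_cases hvy : E v y
    · refine chaseN (ho.suffix hsuf1) (hc.suffix hsuf1) hvy ?_ hb
      rw [getLast?_suffix_eq hsuf1 (by simp), hl]
    by_cases hvu : E v u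
    · have hrev : p.reverse = (r'.reverse ++ [y]) ++ v :: u :: l₀.reverse := by
        rw [hp]; simp
      have hsuf3 : (v :: u :: l₀.reverse) <:+ p.reverse := ⟨r'.reverse ++ [y], hrev.symm⟩
      refine chaseN (ho.reverse.suffix hsuf3) ((chain'_skel_reverse hc).suffix hsuf3) hvu ?_ ha
      rw [getLast?_suffix_eq hsuf3 (by simp), getLast?_reverse, hh]
    · have hyv : E y v := hskel_vy.resolve_left hvy
      have huv : E u v := hskel_uv.resolve_right hvu
      have hnb := ho l₀ u v y r' (by rw [hp]; simp)
      by_cases hvS : v ∈ AncSet E S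
      · exact ancS_sub hvS
      · exact absurd (Or.inl ⟨⟨huv, hyv⟩, notAnc_iff.mpr hvS⟩) hnb
end
section
open List
variable {V : Type*} {E : V → V → Prop} {S : Set V}

lemma openL_short {p : List V} (h : p.length ≤ 2) : OpenL E S p := by
  intro l x y z r hp
  apply_fun List.length at hp
  simp at hp; omega

lemma open_glue : ∀ (u : List V) {x : V} {w : List V},
    OpenL E S (u ++ [x]) → OpenL E S (x :: w) →
    (∀ x₀ y₀, u.getLast? = some x₀ → w.head? = some y₀ → ¬ BlockedTriple E S x₀ x y₀) →
    OpenL E S (u ++ x :: w) := by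
  intro u
  induction u with
  | nil => intro x w _ h2 _; exact h2
  | cons a u' ih =>
    intro x w h1 h2 hj
    rw [cons_append] at h1 ⊢
    rw [openL_cons] at h1 ⊢
    constructor
    · intro y z r ht
      cases u' with
      | nil =>
        rw [nil_append] at ht
        cases w with
        | nil => simp at ht
        | cons w0 w' =>
          simp only [cons.injEq] at ht
          obtain ⟨rfl, rfl, _⟩ := ht
          exact hj a w0 rfl rfl
      | cons b u'' =>
        cases u'' with
        | nil =>
          simp only [cons_append, nil_append, cons.injEq] at ht
          obtain ⟨rfl, rfl, _⟩ := ht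
          exact h1.1 b x [] rfl
        | cons c u''' =>
          simp only [cons_append, cons.injEq] at ht
          obtain ⟨rfl, rfl, _⟩ := ht
          exact h1.1 b c (u''' ++ [x]) rfl
    · refine ih h1.2 h2 ?_
      intro x₀ y₀ hx₀ hy₀
      cases u' with
      | nil => simp at hx₀
      | cons b u'' =>
        refine hj x₀ y₀ ?_ hy₀
        rw [getLast?_cons_cons]; exact hx₀

lemma chain'_E_skel {q : List V} (h : Chain' E q) : Chain' (Skel E) q :=
  List.IsChain.imp (fun _ _ hxy => Or.inl hxy) h

lemma open_of_dirpath (hE : IsAcyclicD E) {q : List V} (hc : Chain' E q)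
    (hS : ∀ y ∈ q, y ∉ S) : OpenL E S q := by
  intro l x y z r hp
  have hsuf : Chain' E (x :: y :: z :: r) := hc.suffix ⟨l, hp.symm⟩
  have hxy : E x y := (isChain_cons_cons.mp hsuf).1
  have hyz : E y z := (isChain_cons_cons.mp (isChain_cons_cons.mp hsuf).2).1
  rintro (⟨⟨_, hzy⟩, _⟩ | ⟨_, hyS⟩)
  · exact not_E_both hE hyz hzy
  · exact hS y (by rw [hp]; simp) hyS
end
section
open List
variable {V : Type*} {E : V → V → Prop} {A B S : Set V}

lemma eq_cons_of_head? {l : List V} {x : V} (h : l.head? = some x) : ∃ t, l = x :: t := by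
  cases l with
  | nil => simp at h
  | cons a t => simp only [head?_cons, Option.some.injEq] at h; exact ⟨t, by rw [h]⟩

/-- open walk -/
def OWalkP (E : V → V → Prop) (S : Set V) (a b : V) (p : List V) : Prop :=
  p.Chain' (Skel E) ∧ p.head? = some a ∧ p.getLast? = some b ∧ OpenL E S p

lemma moral_to_owalk (hE : IsAcyclicD E) {b : V} (hb : b ∈ B) :
    ∀ (q : List V) (v : V),
      Chain' (Moral (InducedE E (AncSet E (A ∪ B ∪ S)))) q → q.head? = some v →
      q.getLast? = some b → (∀ x ∈ q, x ∉ S) →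
      (∃ b' ∈ B, ∃ p, OWalkP E S v b' p) ∨
      (∃ a' ∈ A, ∃ b' ∈ B, ∃ p, OWalkP E S a' b' p) := by
  intro q
  induction q with
  | nil => intro v _ hh _ _; simp at hh
  | cons v₀ q' ih =>
    intro v hc hh hl hS
    simp only [head?_cons, Option.some.injEq] at hh
    subst hh
    cases q' with
    | nil =>
      simp only [getLast?_singleton, Option.some.injEq] at hl
      subst hl
      exact Or.inl ⟨v₀, hb, [v₀], isChain_singleton _, rfl, rfl, openL_short (by simp)⟩
    | cons v₂ q'' =>
      have hM : Moral (InducedE E (AncSet E (A ∪ B ∪ S))) v₀ v₂ := (isChain_cons_cons.mp hc).1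
      have hvS : v₀ ∉ S := hS v₀ (by simp)
      have hv₂S : v₂ ∉ S := hS v₂ (by simp)
      have IH := ih v₂ (isChain_cons_cons.mp hc).2 rfl (by rw [← hl]; simp [getLast?_cons_cons])
        (fun x hx => hS x (mem_cons_of_mem _ hx))
      rcases IH with ⟨b', hb', p, hpc, hph, hpl, hpo⟩ | hdone
      case inr => exact Or.inr hdone
      -- we have an open walk p from v₂ to b'
      obtain ⟨p'', rfl⟩ := eq_cons_of_head? hph
      obtain ⟨hne, hor⟩ := hM
      rcases hor with hsk | hsk | ⟨c, ⟨hEvc, hvN, hcN⟩, ⟨hEv₂c, hv₂N, _⟩⟩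
      rotate_left 2
      · -- married through child c
        by_cases hcAnc : c ∈ AncSet E S
        · -- collider at c is open
          refine Or.inl ⟨b', hb', v₀ :: c :: v₂ :: p'', ?_, rfl, by
            rw [getLast?_cons_cons, getLast?_cons_cons]; exact hpl, ?_⟩
          · exact isChain_cons_cons.mpr ⟨Or.inl hEvc, isChain_cons_cons.mpr ⟨Or.inr hEv₂c, hpc⟩⟩
          · rw [openL_cons]
            refine ⟨?_, ?_⟩
            · rintro y z r ht
              obtain ⟨rfl, rfl, _⟩ : c = y ∧ v₂ = z ∧ p'' = r := by simpa using ht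
              rintro (⟨_, hno⟩ | ⟨hnc, _⟩)
              · obtain ⟨d, hd, hr⟩ := hcAnc; exact hno d hd hr
              · exact hnc ⟨hEvc, hEv₂c⟩
            · rw [openL_cons]
              refine ⟨?_, hpo⟩
              rintro y z r ht
              obtain ⟨rfl, _⟩ : v₂ = y ∧ p'' = z :: r := by simpa using ht
              rintro (⟨⟨hcv₂, _⟩, _⟩ | ⟨_, h2⟩)
              · exact not_E_both hE hEv₂c hcv₂
              · exact hv₂S h2
        · have hcS : c ∉ S := fun h => hcAnc (mem_S_anc h)
          rcases anc_split hcN with hcA | hcB | hcS'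
          · -- reroute down to A
            obtain ⟨a', ha', hr⟩ := hcA
            obtain ⟨d, hdc, hdh, hdl, hdS⟩ := sfree_dirpath hr hcAnc
            obtain ⟨t, rfl⟩ := eq_cons_of_head? hdh
            refine Or.inr ⟨a', ha', b', hb', (c :: t).reverse ++ (v₂ :: p''), ?_, ?_, ?_, ?_⟩
            · refine List.IsChain.append (chain'_skel_reverse (chain'_E_skel hdc)) hpc ?_
              intro x hx y hy
              rw [getLast?_reverse] at hx
              simp only [head?_cons, Option.mem_def, Option.some.injEq] at hx hy
              subst hx; subst hy
              exact Or.inr hEv₂c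
            · rw [head?_append, head?_reverse, hdl]; rfl
            · rw [getLast?_append, hpl]; rfl
            · rw [reverse_cons, append_assoc, singleton_append]
              refine open_glue t.reverse ?_ ?_ ?_
              · rw [← reverse_cons]
                exact (open_of_dirpath hE hdc hdS).reverse
              · refine openL_cons.mpr ⟨?_, hpo⟩
                rintro y z r ht
                obtain ⟨rfl, _⟩ : v₂ = y ∧ p'' = z :: r := by simpa using ht
                rintro (⟨⟨hcv₂, _⟩, _⟩ | ⟨_, h2⟩)
                · exact not_E_both hE hEv₂c hcv₂
                · exact hv₂S h2
              · intro x₀ y₀ hx₀ hy₀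
                rw [getLast?_reverse] at hx₀
                simp only [head?_cons, Option.some.injEq] at hy₀
                subst hy₀
                obtain ⟨t', rfl⟩ := eq_cons_of_head? hx₀
                have hcx₀ : E c x₀ := (isChain_cons_cons.mp hdc).1
                rintro (⟨⟨hx₀c, _⟩, _⟩ | ⟨_, h2⟩)
                · exact not_E_both hE hcx₀ hx₀c
                · exact hcS h2
          · -- continue down to B
            obtain ⟨b'', hb'', hr⟩ := hcB
            obtain ⟨d, hdc, hdh, hdl, hdS⟩ := sfree_dirpath hr hcAnc
            obtain ⟨t, rfl⟩ := eq_cons_of_head? hdh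
            refine Or.inl ⟨b'', hb'', v₀ :: c :: t, ?_, rfl, ?_, ?_⟩
            · exact isChain_cons_cons.mpr ⟨Or.inl hEvc, chain'_E_skel hdc⟩
            · rw [getLast?_cons_cons]; exact hdl
            · refine openL_cons.mpr ⟨?_, open_of_dirpath hE hdc hdS⟩
              rintro y z r ht
              obtain ⟨rfl, ht'⟩ : c = y ∧ t = z :: r := by simpa using ht
              have hcz : E c z := by rw [ht'] at hdc; exact (isChain_cons_cons.mp hdc).1
              rintro (⟨⟨_, hzc⟩, _⟩ | ⟨_, h2⟩)
              · exact not_E_both hE hcz hzc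
              · exact hcS h2
          · exact absurd hcS' hcAnc
      all_goals {
      -- skeleton edge between v₀ and v₂ (in either direction)
      have hskel : Skel E v₀ v₂ := by
        first
        | exact Or.inl hsk.1
        | exact Or.inr hsk.1
      have hv₂N : v₂ ∈ AncSet E (A ∪ B ∪ S) := by
        first
        | exact hsk.2.2
        | exact hsk.2.1
      cases p'' with
      | nil =>
        -- p = [v₂], so b' = v₂
        simp only [getLast?_singleton, Option.some.injEq] at hpl
        subst hpl
        exact Or.inl ⟨v₂, hb', [v₀, v₂], isChain_cons_cons.mpr ⟨hskel, isChain_singleton _⟩,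
          rfl, rfl, openL_short (by simp)⟩
      | cons y p''' =>
        by_cases hbt : BlockedTriple E S v₀ v₂ y
        · -- the triple is blocked: necessarily an open problem collider; reroute
          have hcol : E v₀ v₂ ∧ E y v₂ ∧ v₂ ∉ AncSet E S := by
            rcases hbt with ⟨⟨h1, h2⟩, hno⟩ | ⟨_, h2⟩
            · exact ⟨h1, h2, notAnc_iff.mp hno⟩
            · exact absurd h2 hv₂S
          obtain ⟨hEvv₂, hEyv₂, hv₂Anc⟩ := hcol
          rcases anc_split hv₂N with hcA | hcB | hcS'
          · -- reroute down to A
            obtain ⟨a', ha', hr⟩ := hcA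
            obtain ⟨d, hdc, hdh, hdl, hdS⟩ := sfree_dirpath hr hv₂Anc
            obtain ⟨t, rfl⟩ := eq_cons_of_head? hdh
            refine Or.inr ⟨a', ha', b', hb', t.reverse ++ (v₂ :: y :: p'''), ?_, ?_, ?_, ?_⟩
            · refine List.IsChain.append ?_ hpc ?_
              · exact (chain'_skel_reverse (chain'_E_skel hdc)).prefix ⟨[v₂], by simp⟩
              · intro x hx y' hy
                rw [getLast?_reverse] at hx
                simp only [head?_cons, Option.mem_def, Option.some.injEq] at hx hy
                subst hy
                cases t with
                | nil => simp at hx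
                | cons t0 t' =>
                  simp only [head?_cons, Option.some.injEq] at hx
                  subst hx
                  exact Or.inr (isChain_cons_cons.mp hdc).1
            · cases t with
              | nil =>
                -- v₂ = a' itself
                simp only [getLast?_singleton, Option.some.injEq] at hdl
                subst hdl
                simp
              | cons t0 t' =>
                rw [head?_append, head?_reverse]
                have : (t0 :: t').getLast? = some a' := by
                  rw [← hdl, getLast?_cons_cons]
                rw [this]; rfl
            · rw [getLast?_append, hpl]; rfl
            · refine open_glue t.reverse ?_ hpo ?_
              · rw [← reverse_cons]
                exact (open_of_dirpath hE hdc hdS).reverse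
              · intro x₀ y₀ hx₀ hy₀
                rw [getLast?_reverse] at hx₀
                simp only [head?_cons, Option.some.injEq] at hy₀
                subst hy₀
                obtain ⟨t', rfl⟩ := eq_cons_of_head? hx₀
                have hcx₀ : E v₂ x₀ := (isChain_cons_cons.mp hdc).1
                rintro (⟨⟨hx₀c, _⟩, _⟩ | ⟨_, h2⟩)
                · exact not_E_both hE hcx₀ hx₀c
                · exact hv₂S h2
          · -- continue down to B
            obtain ⟨b'', hb'', hr⟩ := hcB
            obtain ⟨d, hdc, hdh, hdl, hdS⟩ := sfree_dirpath hr hv₂Anc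
            obtain ⟨t, rfl⟩ := eq_cons_of_head? hdh
            refine Or.inl ⟨b'', hb'', v₀ :: v₂ :: t, ?_, rfl, ?_, ?_⟩
            · exact isChain_cons_cons.mpr ⟨hskel, chain'_E_skel hdc⟩
            · rw [getLast?_cons_cons]; exact hdl
            · refine openL_cons.mpr ⟨?_, open_of_dirpath hE hdc hdS⟩
              rintro y' z r ht
              obtain ⟨rfl, ht'⟩ : v₂ = y' ∧ t = z :: r := by simpa using ht
              have hcz : E v₂ z := by rw [ht'] at hdc; exact (isChain_cons_cons.mp hdc).1
              rintro (⟨⟨_, hzc⟩, _⟩ | ⟨_, h2⟩)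
              · exact not_E_both hE hcz hzc
              · exact hv₂S h2
          · exact absurd hcS' hv₂Anc
        · -- triple open: just prepend
          refine Or.inl ⟨b', hb', v₀ :: v₂ :: y :: p''', isChain_cons_cons.mpr ⟨hskel, hpc⟩,
            rfl, ?_, ?_⟩
          · rw [getLast?_cons_cons]; exact hpl
          · refine openL_cons.mpr ⟨?_, hpo⟩
            rintro y' z r ht
            obtain ⟨rfl, rfl, _⟩ : v₂ = y' ∧ y = z ∧ p''' = r := by simpa using ht
            exact hbt
      }
end
section
open List
variable {V : Type*} {E : V → V → Prop} {S : Set V}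

lemma not_nodup_decomp {l : List V} (h : ¬ l.Nodup) :
    ∃ (l₁ : List V) (x : V) (l₂ l₃ : List V), l = l₁ ++ x :: (l₂ ++ x :: l₃) := by
  induction l with
  | nil => exact absurd nodup_nil h
  | cons a t ih =>
    by_cases ha : a ∈ t
    · obtain ⟨s, u, rfl⟩ := List.append_of_mem ha
      exact ⟨[], a, s, u, rfl⟩
    · have : ¬ t.Nodup := fun hn => h (nodup_cons.mpr ⟨ha, hn⟩)
      obtain ⟨l₁, x, l₂, l₃, rfl⟩ := ih this
      exact ⟨a :: l₁, x, l₂, l₃, rfl⟩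

lemma head?_append_ne {l X Y : List V} (hl : l ≠ []) : (l ++ X).head? = (l ++ Y).head? := by
  cases l with
  | nil => exact absurd rfl hl
  | cons a t => simp

lemma getLast?_append_ne {X : List V} {y : V} {r₁ : List V} :
    (X ++ y :: r₁).getLast? = (y :: r₁).getLast? := by
  rw [getLast?_append]
  cases h : (y :: r₁).getLast? with
  | none => exact absurd (getLast?_eq_none_iff.mp h) (by simp)
  | some _ => rfl

lemma owalk_to_trail (hE : IsAcyclicD E) {a b : V} (hab : a ≠ b) :
    ∀ n (p : List V), p.length ≤ n → OWalkP E S a b p →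
      ∃ q, OWalkP E S a b q ∧ q.Nodup := by
  intro n
  induction n with
  | zero =>
    intro p hp hw
    obtain ⟨_, hh, _, _⟩ := hw
    cases p
    · simp at hh
    · simp at hp
  | succ n ih =>
    intro p hp hw
    by_cases hnd : p.Nodup
    · exact ⟨p, hw, hnd⟩
    obtain ⟨l, v, m, r, rfl⟩ := not_nodup_decomp hnd
    obtain ⟨hc, hh, hl, ho⟩ := hw
    rcases List.eq_nil_or_concat l with rfl | ⟨l₀, u, rfl⟩
    · -- v = a ; take the second-occurrence suffix
      simp only [nil_append, head?_cons, Option.some.injEq] at hh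
      subst hh
      have hsuf : (v :: r) <:+ (v :: (m ++ v :: r)) := ⟨v :: m, by simp⟩
      refine ih (v :: r) ?_ ⟨hc.suffix hsuf, rfl, ?_, ho.suffix hsuf⟩
      · have := hp; simp at this ⊢; omega
      · rw [← hl, getLast?_suffix_eq hsuf (by simp)]; rfl
    rw [concat_eq_append] at *
    cases r with
    | nil =>
      -- v = b ; take the prefix
      have hlv : v = b := by
        have h2 : ((l₀ ++ [u]) ++ v :: (m ++ [v])).getLast? = some v := by
          rw [show (l₀ ++ [u]) ++ v :: (m ++ [v]) = ((l₀ ++ [u]) ++ v :: m) ++ [v] by simp,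
            getLast?_concat]
        rw [h2] at hl; injection hl
      subst hlv
      have hpre : ((l₀ ++ [u]) ++ [v]) <+: ((l₀ ++ [u]) ++ v :: (m ++ v :: [])) :=
        ⟨m ++ [v], by simp⟩
      refine ih ((l₀ ++ [u]) ++ [v]) ?_ ⟨hc.prefix hpre, ?_, by rw [getLast?_concat],
        ho.prefix hpre⟩
      · have := hp; simp at this ⊢; omega
      · rw [← hh]; exact head?_append_ne (by simp)
    | cons y r₁ =>
      cases m with
      | nil =>
        -- immediate self-loop v v: contradiction with acyclicity
        have hskvv : Skel E v v := by
          have hsuf : (v :: v :: y :: r₁) <:+ ((l₀ ++ [u]) ++ v :: ([] ++ v :: y :: r₁)) :=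
            ⟨l₀ ++ [u], by simp⟩
          exact (isChain_cons_cons.mp (hc.suffix hsuf)).1
        rcases hskvv with h | h <;> exact absurd h (not_E_self hE v)
      | cons m₀ m' =>
        -- p = (l₀++[u]) ++ v :: (m₀::m') ++ v :: y :: r₁  : splice out the loop
        obtain ⟨ms, m₁, hm⟩ : ∃ s x, m₀ :: m' = s ++ [x] :=
          ⟨(m₀ :: m').dropLast, (m₀ :: m').getLast (by simp),
            (dropLast_append_getLast (by simp)).symm⟩
        have hT1 : ¬ BlockedTriple E S u v m₀ :=
          ho l₀ u v m₀ (m' ++ v :: y :: r₁) (by simp)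
        have hT2 : ¬ BlockedTriple E S m₁ v y :=
          ho ((l₀ ++ [u]) ++ v :: ms) m₁ v y r₁ (by rw [hm]; simp)
        have hsufv : (v :: m₀ :: (m' ++ v :: y :: r₁)) <:+
            ((l₀ ++ [u]) ++ v :: ((m₀ :: m') ++ v :: y :: r₁)) := ⟨l₀ ++ [u], by simp⟩
        have hsufu : (u :: v :: m₀ :: (m' ++ v :: y :: r₁)) <:+
            ((l₀ ++ [u]) ++ v :: ((m₀ :: m') ++ v :: y :: r₁)) := ⟨l₀, by simp⟩
        have hnewtriple : ¬ BlockedTriple E S u v y := by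
          rintro (⟨⟨huv, hyv⟩, hno⟩ | ⟨hnc, hvS⟩)
          · have hvAnc : v ∉ AncSet E S := notAnc_iff.mp hno
            have hm₀v : ¬ E m₀ v := fun h => hT1 (Or.inl ⟨⟨huv, h⟩, hno⟩)
            have hvm₀ : E v m₀ :=
              ((isChain_cons_cons.mp (hc.suffix hsufv)).1).resolve_right hm₀v
            have hch : Chain' E (v :: m₀ :: (m' ++ v :: y :: r₁)) :=
              chase _ v m₀ hvAnc (ho.suffix hsufv) (hc.suffix hsufv) hvm₀
            have hch2 : Chain' E ((v :: ms) ++ (m₁ :: v :: y :: r₁)) := by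
              rw [show (v :: ms) ++ (m₁ :: v :: y :: r₁)
                  = v :: m₀ :: (m' ++ v :: y :: r₁) by rw [show m₀ :: (m' ++ v :: y :: r₁)
                    = (m₀ :: m') ++ v :: y :: r₁ by simp, hm]; simp]
              exact hch
            have hm₁v : E m₁ v := (isChain_cons_cons.mp (isChain_append.mp hch2).2.1).1
            exact hT2 (Or.inl ⟨⟨hm₁v, hyv⟩, hno⟩)
          · have h1 : E u v := by
              by_contra h
              exact hT1 (Or.inr ⟨fun hh' => h hh'.1, hvS⟩)
            have h2 : E y v := by
              by_contra h
              exact hT2 (Or.inr ⟨fun hh' => h hh'.2, hvS⟩)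
            exact hnc ⟨h1, h2⟩
        -- the spliced walk
        set L := l₀ ++ [u] with hL
        have hqc : Chain' (Skel E) (L ++ v :: y :: r₁) := by
          refine List.IsChain.append (hc.prefix ⟨v :: ((m₀ :: m') ++ v :: y :: r₁), by simp⟩)
            (hc.suffix ⟨L ++ v :: (m₀ :: m'), by simp⟩) ?_
          intro x hx y' hy
          simp only [hL, getLast?_concat, Option.mem_def, Option.some.injEq,
            head?_cons] at hx hy
          subst hx; subst hy
          exact (isChain_cons_cons.mp (hc.suffix hsufu)).1
        refine ih (L ++ v :: y :: r₁) ?_ ⟨hqc, ?_, ?_, ?_⟩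
        · have := hp; simp at this ⊢; omega
        · rw [← hh]; exact head?_append_ne (by simp [hL])
        · rw [show L ++ v :: y :: r₁ = (L ++ [v]) ++ y :: r₁ by simp, getLast?_append_ne,
            ← hl, show L ++ v :: ((m₀ :: m') ++ v :: y :: r₁)
              = (L ++ v :: (m₀ :: m') ++ [v]) ++ y :: r₁ by simp, getLast?_append_ne]
        · refine open_glue L (ho.prefix ⟨(m₀ :: m') ++ v :: y :: r₁, by simp⟩)
            (ho.suffix ⟨L ++ v :: (m₀ :: m'), by simp⟩) ?_
          intro x₀ y₀ hx₀ hy₀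
          simp only [hL, getLast?_concat, Option.some.injEq, head?_cons] at hx₀ hy₀
          subst hx₀; subst hy₀
          exact hnewtriple
end
section
open List
variable {V : Type*} {E : V → V → Prop} {A B S : Set V}

lemma trail_to_moralwalk (hE : IsAcyclicD E) :
    ∀ n (q : List V) (x t : V), q.length ≤ n → 2 ≤ q.length →
      Chain' (Skel E) q → OpenL E S q → (∀ v ∈ q, v ∈ AncSet E (A ∪ B ∪ S)) → q.Nodup →
      q.head? = some x → q.getLast? = some t → x ∉ S → t ∉ S →
      ∃ m, Chain' (Moral (InducedE E (AncSet E (A ∪ B ∪ S)))) m ∧ m.head? = some x ∧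
        m.getLast? = some t ∧ ∀ v ∈ m, v ∉ S := by
  intro n
  induction n with
  | zero => intro q x t h1 h2 _ _ _ _ _ _ _ _; omega
  | succ n ih =>
    intro q x t hlen hlen2 hc ho hN hnd hh hl hxS htS
    obtain ⟨q₁, rfl⟩ := eq_cons_of_head? hh
    cases q₁ with
    | nil => simp at hlen2
    | cons y r =>
    have hxN : x ∈ AncSet E (A ∪ B ∪ S) := hN x (by simp)
    have hyN : y ∈ AncSet E (A ∪ B ∪ S) := hN y (by simp)
    have hxy : Skel E x y := (isChain_cons_cons.mp hc).1
    cases r with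
    | nil =>
      -- q = [x, y], t = y
      have : y = t := by simpa using hl
      subst this
      refine ⟨[x, y], ?_, rfl, rfl, ?_⟩
      · refine isChain_cons_cons.mpr ⟨⟨?_, ?_⟩, isChain_singleton _⟩
        · simpa using (nodup_cons.mp hnd).1
        · rcases hxy with h | h
          · exact Or.inl ⟨h, hxN, hyN⟩
          · exact Or.inr (Or.inl ⟨h, hyN, hxN⟩)
      · intro v hv; rcases (by simpa using hv : v = x ∨ v = y) with rfl | rfl
        · exact hxS
        · exact htS
    | cons z r' =>
      have hzN : z ∈ AncSet E (A ∪ B ∪ S) := hN z (by simp)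
      by_cases hcol : E x y ∧ E z y
      · -- collider at y: use the marriage x - z
        have hMxz : Moral (InducedE E (AncSet E (A ∪ B ∪ S))) x z := by
          refine ⟨?_, Or.inr (Or.inr ⟨y, ⟨hcol.1, hxN, hyN⟩, ⟨hcol.2, hzN, hyN⟩⟩)⟩
          intro hxz
          exact (nodup_cons.mp hnd).1 (hxz ▸ (by simp : z ∈ y :: z :: r'))
        cases r' with
        | nil =>
          have : z = t := by simpa using hl
          subst this
          refine ⟨[x, z], isChain_cons_cons.mpr ⟨hMxz, isChain_singleton _⟩, rfl, rfl, ?_⟩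
          intro v hv; rcases (by simpa using hv : v = x ∨ v = z) with rfl | rfl
          · exact hxS
          · exact htS
        | cons w r'' =>
          have hzS : z ∉ S := by
            intro hzS
            refine ho [x] y z w r'' rfl (Or.inr ⟨?_, hzS⟩)
            rintro ⟨hyz, _⟩
            exact not_E_both hE hcol.2 hyz
          have hsuf : (z :: w :: r'') <:+ (x :: y :: z :: w :: r'') := ⟨[x, y], rfl⟩
          obtain ⟨m', hmc, hmh, hml, hmS⟩ := ih (z :: w :: r'') z t
            (by simp at hlen ⊢; omega) (by simp)
            (hc.suffix hsuf) (ho.suffix hsuf)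
            (fun v hv => hN v (hsuf.subset hv)) (hnd.sublist hsuf.sublist)
            rfl (by rw [← hl]; rfl) hzS htS
          obtain ⟨m'', rfl⟩ := eq_cons_of_head? hmh
          refine ⟨x :: z :: m'', isChain_cons_cons.mpr ⟨hMxz, hmc⟩, rfl, ?_, ?_⟩
          · rw [← hml]; rfl
          · intro v hv
            rcases mem_cons.mp hv with rfl | hv
            · exact hxS
            · exact hmS v hv
      · -- non-collider at y
        have hyS : y ∉ S := fun hyS => ho [] x y z r' rfl (Or.inr ⟨hcol, hyS⟩)
        have hMxy : Moral (InducedE E (AncSet E (A ∪ B ∪ S))) x y := by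
          refine ⟨fun h => (nodup_cons.mp hnd).1 (h ▸ (by simp : y ∈ y :: z :: r')), ?_⟩
          rcases hxy with h | h
          · exact Or.inl ⟨h, hxN, hyN⟩
          · exact Or.inr (Or.inl ⟨h, hyN, hxN⟩)
        have hsuf : (y :: z :: r') <:+ (x :: y :: z :: r') := ⟨[x], rfl⟩
        obtain ⟨m', hmc, hmh, hml, hmS⟩ := ih (y :: z :: r') y t
          (by simp at hlen ⊢; omega) (by simp)
          (hc.suffix hsuf) (ho.suffix hsuf)
          (fun v hv => hN v (hsuf.subset hv)) (hnd.sublist hsuf.sublist)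
          rfl (by rw [← hl]; rfl) hyS htS
        obtain ⟨m'', rfl⟩ := eq_cons_of_head? hmh
        refine ⟨x :: y :: m'', isChain_cons_cons.mpr ⟨hMxy, hmc⟩, rfl, ?_, ?_⟩
        · rw [← hml]; rfl
        · intro v hv
          rcases mem_cons.mp hv with rfl | hv
          · exact hxS
          · exact hmS v hv

lemma walk_to_upath {G : V → V → Prop} :
    ∀ n (m : List V) (a b : V), m.length ≤ n → Chain' G m → m.head? = some a →
      m.getLast? = some b → ∃ u, UPath G a b u ∧ ∀ x ∈ u, x ∈ m := by
  intro n
  induction n with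
  | zero =>
    intro m a b h1 _ hh _
    cases m
    · simp at hh
    · simp at h1
  | succ n ih =>
    intro m a b hlen hc hh hl
    by_cases hnd : m.Nodup
    · exact ⟨m, ⟨hc, hh, hl, hnd⟩, fun x hx => hx⟩
    obtain ⟨l, v, mm, r, rfl⟩ := not_nodup_decomp hnd
    have hssub : ∀ x ∈ l ++ v :: r, x ∈ l ++ v :: (mm ++ v :: r) := by
      intro x hx; simp at hx ⊢; tauto
    have hqc : Chain' G (l ++ v :: r) := by
      rcases List.eq_nil_or_concat l with rfl | ⟨l₀, u, rfl⟩
      · exact hc.suffix ⟨v :: mm, by simp⟩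
      · rw [concat_eq_append] at *
        refine List.IsChain.append (hc.prefix ⟨v :: (mm ++ v :: r), by simp⟩)
          (hc.suffix ⟨(l₀ ++ [u]) ++ v :: mm, by simp⟩) ?_
        intro p hp q hq
        simp only [getLast?_concat, Option.mem_def, Option.some.injEq, head?_cons] at hp hq
        subst hp; subst hq
        have hsufu : (u :: v :: (mm ++ v :: r)) <:+ ((l₀ ++ [u]) ++ v :: (mm ++ v :: r)) :=
          ⟨l₀, by simp⟩
        exact (isChain_cons_cons.mp (hc.suffix hsufu)).1
    have hqh : (l ++ v :: r).head? = some a := by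
      rw [← hh]
      cases l
      · rfl
      · simp
    have hql : (l ++ v :: r).getLast? = some b := by
      cases r with
      | nil =>
        rw [show l ++ v :: (mm ++ v :: []) = (l ++ v :: mm) ++ [v] by simp,
          getLast?_concat] at hl
        rw [show l ++ v :: [] = (l ++ []) ++ [v] by simp, getLast?_concat]
        exact hl
      | cons y r₁ =>
        rw [show l ++ v :: (mm ++ v :: y :: r₁) = (l ++ v :: (mm ++ [v])) ++ y :: r₁ by simp,
          getLast?_append_ne] at hl
        rw [show l ++ v :: y :: r₁ = (l ++ [v]) ++ y :: r₁ by simp, getLast?_append_ne]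
        exact hl
    obtain ⟨u', hu', hsub'⟩ := ih (l ++ v :: r) a b (by simp at hlen ⊢; omega) hqc hqh hql
    exact ⟨u', hu', fun x hx => hssub x (hsub' x hx)⟩
end
section
open List
variable {V : Type*}

lemma two_le_of_ends {p : List V} {a b : V} (hh : p.head? = some a) (hl : p.getLast? = some b)
    (hab : a ≠ b) : 2 ≤ p.length := by
  match p with
  | [] => simp at hh
  | [x] =>
    simp only [head?_cons, Option.some.injEq] at hh
    simp only [getLast?_singleton, Option.some.injEq] at hl
    exact absurd (hh ▸ hl ▸ rfl) hab
  | x :: y :: r => simp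

theorem dsep_iff_moral_separation'
    {V : Type*}
    (E : V → V → Prop) (hE : IsAcyclicD E) (A B S : Set V)
    (hAB : Disjoint A B) (hAS : Disjoint A S) (hBS : Disjoint B S) :
    DSep E A B S ↔ USep (Moral (InducedE E (AncSet E (A ∪ B ∪ S)))) A B S := by
  constructor
  · -- DSep → USep
    intro hD a ha b hb q hq
    by_contra hs
    push_neg at hs
    obtain ⟨hc, hh, hl, _⟩ := hq
    have hqS : ∀ x ∈ q, x ∉ S := fun x hx hxS => hs x hxS hx
    have hcon : ∃ a' ∈ A, ∃ b' ∈ B, ∃ p, OWalkP E S a' b' p := by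
      rcases moral_to_owalk hE hb q a hc hh hl hqS with ⟨b', hb', p, hw⟩ | h
      · exact ⟨a, ha, b', hb', p, hw⟩
      · exact h
    obtain ⟨a', ha', b', hb', p, hw⟩ := hcon
    have hab : a' ≠ b' := fun h => (Set.disjoint_left.mp hAB ha') (h ▸ hb')
    obtain ⟨q', ⟨hc', hh', hl', ho'⟩, hnd⟩ := owalk_to_trail hE hab p.length p le_rfl hw
    have htrail : IsTrail E a' b' q' := ⟨hc', hh', hl', hnd, two_le_of_ends hh' hl' hab⟩
    exact (not_blockedTrail_iff.mpr ho') (hD a' ha' b' hb' q' htrail)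
  · -- USep → DSep
    intro hU a ha b hb p htrail
    by_contra hbt
    have ho : OpenL E S p := not_blockedTrail_iff.mp hbt
    obtain ⟨hc, hh, hl, hnd, hlen⟩ := htrail
    have hN : ∀ v ∈ p, v ∈ AncSet E (A ∪ B ∪ S) :=
      mem_N_all hc ho hh hl (self_mem_anc (Or.inl (Or.inl ha)))
        (self_mem_anc (Or.inl (Or.inr hb)))
    have haS : a ∉ S := Set.disjoint_left.mp hAS ha
    have hbS : b ∉ S := Set.disjoint_left.mp hBS hb
    obtain ⟨m, hmc, hmh, hml, hmS⟩ :=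
      trail_to_moralwalk hE p.length p a b le_rfl hlen hc ho hN hnd hh hl haS hbS
    obtain ⟨u, hu, hsub⟩ := walk_to_upath m.length m a b le_rfl hmc hmh hml
    obtain ⟨s, hsS, hsu⟩ := hU a ha b hb u hu
    exact hmS s (hsub s hsu) hsS
end


/-- d-separation of `A` and `B` by `S` holds iff `A` and `B` are separated by `S` in the
moral graph of the ancestral subgraph generated by `A ∪ B ∪ S`. -/
theorem dsep_iff_moral_separation
    {V : Type*} [Fintype V] [DecidableEq V]
    (E : V → V → Prop) (hE : IsAcyclicD E) (A B S : Set V)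
    (hAB : Disjoint A B) (hAS : Disjoint A S) (hBS : Disjoint B S) :
    DSep E A B S ↔ USep (Moral (InducedE E (AncSet E (A ∪ B ∪ S)))) A B S :=
  dsep_iff_moral_separation' E hE A B S hAB hAS hBS
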